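/- Let Z = {z ∈ {0,1}^d : z_d ≤ z_i for all i ∈ [d−1]} with d ≥ 2, and let Δ₁ = {(w, z) ∈ {0,1} × Z : w ≤ Σ_{i∈[d]} z_i}. Then conv(Δ₁) = {(w, z) ∈ [0,1]^{1+d} : w ≤ Σ_{i∈[d−1]} z_i − (d−2)·z_d and z_d ≤ z_i for all i ∈ [d−1]}. -/

import Mathlib

open Finset Set

section helpers
variable {ι : Type*} [Fintype ι] [DecidableEq ι]

private lemma segIcc : convexHull ℝ ({0, 1} : Set ℝ) = Set.Icc 0 1 := by
  rw [convexHull_pair, segment_eq_Icc zero_le_one]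

private lemma hullBox (s : Finset ι) (x : ι → ℝ) (hx : ∀ i, x i ∈ Set.Icc (0:ℝ) 1)
    (hx0 : ∀ i ∉ s, x i = 0) :
    x ∈ convexHull ℝ {z : ι → ℝ | (∀ i, z i = 0 ∨ z i = 1) ∧ ∀ i ∉ s, z i = 0} := by
  classical
  set t : ι → Set ℝ := fun i => if i ∈ s then ({0,1} : Set ℝ) else {0} with ht
  have hsub : Set.pi Set.univ t ⊆
      {z : ι → ℝ | (∀ i, z i = 0 ∨ z i = 1) ∧ ∀ i ∉ s, z i = 0} := by
    intro z hz
    constructor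
    · intro i
      have := hz i (Set.mem_univ i)
      by_cases h : i ∈ s
      · simpa [ht, h] using this
      · simp only [ht, h, if_false, Set.mem_singleton_iff] at this
        exact Or.inl this
    · intro i hi
      have := hz i (Set.mem_univ i)
      simpa [ht, hi] using this
  refine convexHull_mono hsub (mem_convexHull_pi fun i _ => ?_)
  by_cases h : i ∈ s
  · simp only [ht, h, if_true]
    rw [segIcc]; exact hx i
  · simp only [ht, h, if_false, convexHull_singleton, Set.mem_singleton_iff]
    exact hx0 i h

/-- pi-hull lemma with one coordinate pinned to 1. -/
private lemma hullOne (s : Finset ι) (a : ι) (has : a ∈ s) (x : ι → ℝ) (hx : ∀ i, x i ∈ Set.Icc (0:ℝ) 1)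
    (hx0 : ∀ i ∉ s, x i = 0) (hxa : x a = 1) :
    x ∈ convexHull ℝ {z : ι → ℝ | (∀ i, z i = 0 ∨ z i = 1) ∧ (∀ i ∉ s, z i = 0) ∧ z a = 1} := by
  classical
  set t : ι → Set ℝ := fun i => if i = a then ({1} : Set ℝ)
    else if i ∈ s then ({0,1} : Set ℝ) else {0} with ht
  have hsub : Set.pi Set.univ t ⊆
      {z : ι → ℝ | (∀ i, z i = 0 ∨ z i = 1) ∧ (∀ i ∉ s, z i = 0) ∧ z a = 1} := by
    intro z hz
    have hza : z a = 1 := by simpa [ht] using hz a (Set.mem_univ a)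
    refine ⟨fun i => ?_, fun i hi => ?_, hza⟩
    · have := hz i (Set.mem_univ i)
      by_cases h1 : i = a
      · subst h1; exact Or.inr hza
      · by_cases h : i ∈ s
        · simpa [ht, h1, h] using this
        · simp only [ht, h1, h, if_false, Set.mem_singleton_iff] at this
          exact Or.inl this
    · have := hz i (Set.mem_univ i)
      have h1 : i ≠ a := by rintro rfl; exact hi has
      simpa [ht, h1, hi] using this
  refine convexHull_mono hsub (mem_convexHull_pi fun i _ => ?_)
  by_cases h1 : i = a
  · subst h1; simp only [ht, if_pos rfl, convexHull_singleton, Set.mem_singleton_iff]; exact hxa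
  · by_cases h : i ∈ s
    · simp only [ht, h1, if_false, h, if_true]
      rw [segIcc]; exact hx i
    · simp only [ht, h1, h, if_false, convexHull_singleton, Set.mem_singleton_iff]
      exact hx0 i h

end helpers

section helpers2
variable {ι : Type*} [Fintype ι] [DecidableEq ι]

private lemma hullA (s : Finset ι) :
    ∀ y : ι → ℝ, (∀ i, y i ∈ Set.Icc (0:ℝ) 1) → (∀ i ∉ s, y i = 0) → 1 ≤ ∑ i, y i →
    y ∈ convexHull ℝ
      {z : ι → ℝ | (∀ i, z i = 0 ∨ z i = 1) ∧ (∀ i ∉ s, z i = 0) ∧ 1 ≤ ∑ i, z i} := by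
  classical
  induction s using Finset.induction_on with
  | empty =>
    intro y hy hy0 hsum
    exfalso
    have : ∑ i, y i = 0 := Finset.sum_eq_zero fun i _ => hy0 i (Finset.notMem_empty i)
    linarith
  | @insert a t hat ih =>
    intro y hy hy0 hsum
    set α := y a with hαdef
    have hα0 : 0 ≤ α := (hy a).1
    have hα1 : α ≤ 1 := (hy a).2
    have hOneSub : ∀ z : ι → ℝ,
        z ∈ {z : ι → ℝ | (∀ i, z i = 0 ∨ z i = 1) ∧ (∀ i ∉ insert a t, z i = 0) ∧ z a = 1} →
        z ∈ {z : ι → ℝ | (∀ i, z i = 0 ∨ z i = 1) ∧ (∀ i ∉ insert a t, z i = 0) ∧ 1 ≤ ∑ i, z i} := by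
      rintro z ⟨h01, hsupp, hza⟩
      refine ⟨h01, hsupp, ?_⟩
      calc (1:ℝ) = z a := hza.symm
        _ ≤ ∑ i, z i := Finset.single_le_sum (f := z)
            (fun i _ => by rcases h01 i with h|h <;> simp [h]) (Finset.mem_univ a)
    rcases eq_or_lt_of_le hα1 with hα1' | hα1'
    · -- α = 1
      exact convexHull_mono hOneSub
        (hullOne (insert a t) a (Finset.mem_insert_self a t) y hy hy0 (by rw [← hαdef]; exact hα1'))
    rcases eq_or_lt_of_le hα0 with hα0' | hα0'
    · -- α = 0
      refine convexHull_mono ?_ (ih y hy (fun i hi => ?_) hsum)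
      · rintro z ⟨h01, hsupp, hz⟩
        exact ⟨h01, fun i hi => hsupp i fun h => hi (Finset.mem_insert_of_mem h), hz⟩
      · by_cases h : i = a
        · subst h; exact hα0'.symm
        · exact hy0 i (by simp [h, hi])
    -- 0 < α < 1
    have h1α : (0:ℝ) < 1 - α := by linarith
    set p : ι → ℝ := fun i => if i = a then 1 else max (y i - (1 - α)) 0 / α with hp
    set q : ι → ℝ := fun i => if i = a then 0 else min (y i / (1 - α)) 1 with hq
    have hkey : y = α • p + (1 - α) • q := by
      funext i
      simp only [Pi.add_apply, Pi.smul_apply, smul_eq_mul, hp, hq]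
      by_cases h : i = a
      · subst h; simp [← hαdef]
      · simp only [h, if_false]
        rcases le_total (y i) (1 - α) with hle | hle
        · rw [max_eq_right (by linarith), min_eq_left (by rw [div_le_one h1α]; exact hle)]
          field_simp
          ring
        · rw [max_eq_left (by linarith), min_eq_right (by rw [le_div_iff₀ h1α]; linarith)]
          field_simp
          ring
    have hpmem : p ∈ convexHull ℝ
        {z : ι → ℝ | (∀ i, z i = 0 ∨ z i = 1) ∧ (∀ i ∉ insert a t, z i = 0) ∧ 1 ≤ ∑ i, z i} := by
      refine convexHull_mono hOneSub
        (hullOne (insert a t) a (Finset.mem_insert_self a t) p (fun i => ?_) (fun i hi => ?_)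
          (by simp [hp]))
      · by_cases h : i = a
        · subst h; simp [hp]
        · simp only [hp, h, if_false, Set.mem_Icc]
          constructor
          · positivity
          · rw [div_le_one hα0']
            have := (hy i).2
            rcases le_total (y i - (1 - α)) 0 with h'|h'
            · rw [max_eq_right h']; linarith
            · rw [max_eq_left h']; linarith
      · have h : i ≠ a := fun h => hi (h ▸ Finset.mem_insert_self a t)
        simp only [hp, if_neg h, hy0 i hi, zero_sub]
        rw [max_eq_right (by linarith : -(1-α) ≤ (0:ℝ)), zero_div]
    have hqmem : q ∈ convexHull ℝ
        {z : ι → ℝ | (∀ i, z i = 0 ∨ z i = 1) ∧ (∀ i ∉ insert a t, z i = 0) ∧ 1 ≤ ∑ i, z i} := by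
      have hsub : {z : ι → ℝ | (∀ i, z i = 0 ∨ z i = 1) ∧ (∀ i ∉ t, z i = 0) ∧ 1 ≤ ∑ i, z i} ⊆
          {z : ι → ℝ | (∀ i, z i = 0 ∨ z i = 1) ∧ (∀ i ∉ insert a t, z i = 0) ∧ 1 ≤ ∑ i, z i} := by
        rintro z ⟨h01, hsupp, hz⟩
        exact ⟨h01, fun i hi => hsupp i fun h => hi (Finset.mem_insert_of_mem h), hz⟩
      refine convexHull_mono hsub (ih q (fun i => ?_) (fun i hi => ?_) ?_)
      · by_cases h : i = a
        · subst h; simp [hq]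
        · simp only [hq, h, if_false, Set.mem_Icc]
          refine ⟨le_min (div_nonneg (hy i).1 h1α.le) zero_le_one, min_le_right _ _⟩
      · by_cases h : i = a
        · subst h; simp [hq]
        · have hia : i ∉ insert a t := by simp [h, hi]
          simp [hq, h, hy0 i hia]
      · by_cases hex : ∃ i, i ≠ a ∧ 1 - α ≤ y i
        · obtain ⟨i, hia, hle⟩ := hex
          have hqi : q i = 1 := by
            simp only [hq, hia, if_false]
            rw [min_eq_right]
            rw [le_div_iff₀ h1α]; linarith
          calc (1:ℝ) = q i := hqi.symm
            _ ≤ ∑ j, q j := Finset.single_le_sum (f := q)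
                (fun j _ => by
                  by_cases h : j = a
                  · simp [hq, h]
                  · simp only [hq, h, if_false]
                    exact le_min (div_nonneg (hy j).1 h1α.le) zero_le_one)
                (Finset.mem_univ i)
        · push_neg at hex
          have hall : ∀ i, i ≠ a → y i < 1 - α := hex
          have h1 : ∑ i, q i = (∑ i, (if i = a then 0 else y i)) / (1 - α) := by
            rw [Finset.sum_div]
            refine Finset.sum_congr rfl fun i _ => ?_
            by_cases h : i = a
            · simp [hq, h]
            · simp only [hq, h, if_false]
              rw [min_eq_left (by rw [div_le_one h1α]; exact (hall i h).le)]
          have h2 : ∑ i, (if i = a then 0 else y i) = (∑ i, y i) - α := by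
            have e0 : ∀ i, (if i = a then (0:ℝ) else y i)
                = y i - (if i = a then y i else 0) := by
              intro i; by_cases h : i = a <;> simp [h]
            rw [Finset.sum_congr rfl fun i _ => e0 i, Finset.sum_sub_distrib,
              Finset.sum_ite_eq' Finset.univ a y]
            simp [← hαdef]
          rw [h1, h2, le_div_iff₀ h1α]
          linarith
    rw [hkey]
    exact convex_convexHull ℝ _ hpmem hqmem hα0 (by linarith) (by ring)

end helpers2

section helpers3
variable {ι : Type*} [Fintype ι] [DecidableEq ι]

private lemma hullC (s : Finset ι) (w : ℝ) (y : ι → ℝ) (hw : w ∈ Set.Icc (0:ℝ) 1)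
    (hy : ∀ i, y i ∈ Set.Icc (0:ℝ) 1) (hy0 : ∀ i ∉ s, y i = 0) (hwy : w ≤ ∑ i, y i) :
    (w, y) ∈ convexHull ℝ {p : ℝ × (ι → ℝ) | (p.1 = 0 ∨ p.1 = 1) ∧
      (∀ i, p.2 i = 0 ∨ p.2 i = 1) ∧ (∀ i ∉ s, p.2 i = 0) ∧ p.1 ≤ ∑ i, p.2 i} := by
  classical
  set T : Set (ℝ × (ι → ℝ)) := {p : ℝ × (ι → ℝ) | (p.1 = 0 ∨ p.1 = 1) ∧
      (∀ i, p.2 i = 0 ∨ p.2 i = 1) ∧ (∀ i ∉ s, p.2 i = 0) ∧ p.1 ≤ ∑ i, p.2 i} with hT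
  -- attaching first coordinate 0
  have hzero : ∀ x : ι → ℝ, (∀ i, x i ∈ Set.Icc (0:ℝ) 1) → (∀ i ∉ s, x i = 0) →
      ((0:ℝ), x) ∈ convexHull ℝ T := by
    intro x hx hx0
    have hmem : ((0:ℝ), x) ∈ convexHull ℝ
        (({0} : Set ℝ) ×ˢ {z : ι → ℝ | (∀ i, z i = 0 ∨ z i = 1) ∧ ∀ i ∉ s, z i = 0}) :=
      mk_mem_convexHull_prod (by simp) (hullBox s x hx hx0)
    refine convexHull_mono ?_ hmem
    rintro ⟨u, z⟩ ⟨hu, h01, hsupp⟩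
    simp only [Set.mem_singleton_iff] at hu
    subst hu
    refine ⟨Or.inl rfl, h01, hsupp, Finset.sum_nonneg fun i _ => ?_⟩
    have h' : z i = 0 ∨ z i = 1 := h01 i
    rcases h' with h|h <;> simp [h]
  -- attaching first coordinate 1
  have hone : ∀ x : ι → ℝ, (∀ i, x i ∈ Set.Icc (0:ℝ) 1) → (∀ i ∉ s, x i = 0) →
      1 ≤ ∑ i, x i → ((1:ℝ), x) ∈ convexHull ℝ T := by
    intro x hx hx0 hxs
    have hmem : ((1:ℝ), x) ∈ convexHull ℝ
        (({1} : Set ℝ) ×ˢ {z : ι → ℝ | (∀ i, z i = 0 ∨ z i = 1) ∧ (∀ i ∉ s, z i = 0)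
          ∧ 1 ≤ ∑ i, z i}) :=
      mk_mem_convexHull_prod (by simp) (hullA s x hx hx0 hxs)
    refine convexHull_mono ?_ hmem
    rintro ⟨u, z⟩ ⟨hu, h01, hsupp, hz⟩
    simp only [Set.mem_singleton_iff] at hu
    subst hu
    exact ⟨Or.inr rfl, h01, hsupp, hz⟩
  rcases eq_or_lt_of_le hw.1 with hw0 | hw0
  · -- w = 0
    rw [← hw0]; exact hzero y hy hy0
  rcases eq_or_lt_of_le hw.2 with hw1 | hw1
  · -- w = 1
    rw [hw1]; exact hone y hy hy0 (hw1 ▸ hwy)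
  -- 0 < w < 1
  have h1w : (0:ℝ) < 1 - w := by linarith
  set y1 : ι → ℝ := fun i => min (y i / w) 1 with hy1
  set y0 : ι → ℝ := fun i => max (y i - w) 0 / (1 - w) with hy0'
  have hkey : (w, y) = w • ((1:ℝ), y1) + (1 - w) • ((0:ℝ), y0) := by
    simp only [Prod.smul_mk, Prod.mk_add_mk, smul_eq_mul, Prod.mk.injEq]
    refine ⟨by ring, ?_⟩
    funext i
    simp only [Pi.add_apply, Pi.smul_apply, smul_eq_mul, hy1, hy0']
    rcases le_total (y i) w with hle | hle
    · rw [min_eq_left (by rw [div_le_one hw0]; exact hle), max_eq_right (by linarith)]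
      field_simp
      ring
    · rw [min_eq_right (by rw [le_div_iff₀ hw0]; linarith), max_eq_left (by linarith)]
      field_simp
      ring
  have h1mem : ((1:ℝ), y1) ∈ convexHull ℝ T := by
    refine hone y1 (fun i => ?_) (fun i hi => ?_) ?_
    · exact ⟨le_min (div_nonneg (hy i).1 hw0.le) zero_le_one, min_le_right _ _⟩
    · simp [hy1, hy0 i hi]
    · by_cases hex : ∃ i, w ≤ y i
      · obtain ⟨i, hle⟩ := hex
        have : y1 i = 1 := by
          simp only [hy1]
          rw [min_eq_right]
          rw [le_div_iff₀ hw0]; linarith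
        calc (1:ℝ) = y1 i := this.symm
          _ ≤ ∑ j, y1 j := Finset.single_le_sum (f := y1)
              (fun j _ => le_min (div_nonneg (hy j).1 hw0.le) zero_le_one)
              (Finset.mem_univ i)
      · push_neg at hex
        have h1 : ∑ i, y1 i = (∑ i, y i) / w := by
          rw [Finset.sum_div]
          exact Finset.sum_congr rfl fun i _ => min_eq_left (by
            rw [div_le_one hw0]; exact (hex i).le)
        rw [h1, le_div_iff₀ hw0]; linarith
  have h0mem : ((0:ℝ), y0) ∈ convexHull ℝ T := by
    refine hzero y0 (fun i => ?_) (fun i hi => ?_)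
    · constructor
      · positivity
      · rw [div_le_one h1w]
        rcases le_total (y i - w) 0 with h|h
        · rw [max_eq_right h]; linarith
        · rw [max_eq_left h]; linarith [(hy i).2]
    · simp only [hy0', hy0 i hi, zero_sub]
      rw [max_eq_right (by linarith : -w ≤ (0:ℝ)), zero_div]
  rw [hkey]
  exact convex_convexHull ℝ _ h1mem h0mem hw0.le (by linarith) (by ring)

end helpers3

/-- Convex hull of `Δ₁` for the strong hierarchy set
`Z = {z ∈ {0,1}^d : z_d ≤ z_i, ∀ i ∈ [d-1]}`. -/
theorem convexHull_Delta1_strong_hierarchy {d : ℕ} (hd : 2 ≤ d) :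
    convexHull ℝ {q : ℝ × (Fin d → ℝ) |
        (q.1 = 0 ∨ q.1 = 1) ∧
        ((∀ i, q.2 i = 0 ∨ q.2 i = 1) ∧
          ∀ i : Fin d, i ≠ ⟨d - 1, by omega⟩ → q.2 ⟨d - 1, by omega⟩ ≤ q.2 i) ∧
        q.1 ≤ ∑ i, q.2 i}
      = {q : ℝ × (Fin d → ℝ) |
        q.1 ∈ Set.Icc (0 : ℝ) 1 ∧ (∀ i, q.2 i ∈ Set.Icc (0 : ℝ) 1) ∧
        q.1 ≤ (∑ i ∈ Finset.univ.erase ⟨d - 1, by omega⟩, q.2 i)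
          - ((d : ℝ) - 2) * q.2 ⟨d - 1, by omega⟩ ∧
        ∀ i : Fin d, i ≠ ⟨d - 1, by omega⟩ → q.2 ⟨d - 1, by omega⟩ ≤ q.2 i} := by
  classical
  set ℓ : Fin d := ⟨d - 1, by omega⟩ with hℓ
  set V : Set (ℝ × (Fin d → ℝ)) := {q : ℝ × (Fin d → ℝ) |
        (q.1 = 0 ∨ q.1 = 1) ∧
        ((∀ i, q.2 i = 0 ∨ q.2 i = 1) ∧
          ∀ i : Fin d, i ≠ ℓ → q.2 ℓ ≤ q.2 i) ∧
        q.1 ≤ ∑ i, q.2 i} with hV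
  have hcard : ((Finset.univ.erase ℓ).card : ℝ) = (d:ℝ) - 1 := by
    rw [Finset.card_erase_of_mem (Finset.mem_univ ℓ), Finset.card_univ, Fintype.card_fin,
      Nat.cast_sub (by omega : 1 ≤ d), Nat.cast_one]
  have hsum_split : ∀ f : Fin d → ℝ, ∑ i, f i = f ℓ + ∑ i ∈ Finset.univ.erase ℓ, f i :=
    fun f => (Finset.add_sum_erase _ f (Finset.mem_univ ℓ)).symm
  have hdR : (2:ℝ) ≤ (d:ℝ) := by exact_mod_cast hd
  apply Set.Subset.antisymm
  · -- hull ⊆ P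
    apply convexHull_min
    · rintro q ⟨hw01, ⟨hz01, hhier⟩, hsum⟩
      refine ⟨?_, fun i => ?_, ?_, hhier⟩
      · rcases hw01 with h|h <;> rw [h] <;> simp
      · rcases hz01 i with h|h <;> rw [h] <;> simp
      · rcases hz01 ℓ with h0 | h1
        · have hs := hsum_split q.2
          rw [h0, mul_zero, sub_zero]
          rw [hs, h0, zero_add] at hsum
          exact hsum
        · have hall : ∀ i, q.2 i = 1 := by
            intro i
            rcases eq_or_ne i ℓ with rfl | hne
            · exact h1
            · rcases hz01 i with h|h
              · exfalso; have := hhier i hne; rw [h, h1] at this; linarith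
              · exact h
          have hc : ∑ i ∈ Finset.univ.erase ℓ, q.2 i = (d:ℝ) - 1 := by
            rw [Finset.sum_congr rfl fun i _ => hall i, Finset.sum_const, nsmul_eq_mul,
              mul_one, hcard]
          rw [hc, h1, mul_one]
          have hw1 : q.1 ≤ 1 := by rcases hw01 with h|h <;> rw [h] <;> norm_num
          linarith
    · -- convexity of P
      rintro x ⟨hx1, hx2, hx3, hx4⟩ y ⟨hy1, hy2, hy3, hy4⟩ a b ha hb hab
      simp only [Set.mem_setOf_eq, Prod.fst_add, Prod.snd_add, Prod.smul_fst, Prod.smul_snd,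
        Pi.add_apply, Pi.smul_apply, smul_eq_mul, Set.mem_Icc] at *
      refine ⟨⟨?_, ?_⟩, fun i => ⟨?_, ?_⟩, ?_, fun i hi => ?_⟩
      · nlinarith [hx1.1, hy1.1]
      · nlinarith [hx1.2, hy1.2]
      · nlinarith [(hx2 i).1, (hy2 i).1]
      · nlinarith [(hx2 i).2, (hy2 i).2]
      · rw [Finset.sum_add_distrib, ← Finset.mul_sum, ← Finset.mul_sum]
        have h1 := mul_le_mul_of_nonneg_left hx3 ha
        have h2 := mul_le_mul_of_nonneg_left hy3 hb
        nlinarith [h1, h2]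
      · exact add_le_add (mul_le_mul_of_nonneg_left (hx4 i hi) ha)
          (mul_le_mul_of_nonneg_left (hy4 i hi) hb)
  · -- P ⊆ hull
    rintro ⟨w, z⟩ ⟨hw, hz, hkey, hhier⟩
    simp only [Set.mem_Icc] at hw hz
    dsimp only at hkey hhier
    -- all-ones helper
    have hones : ∀ w₁ : ℝ, 0 ≤ w₁ → w₁ ≤ 1 →
        ((w₁, fun _ => (1:ℝ)) : ℝ × (Fin d → ℝ)) ∈ convexHull ℝ V := by
      intro w₁ h0 h1
      have hsc : ∑ _i : Fin d, (1:ℝ) = (d:ℝ) := by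
        rw [Finset.sum_const, nsmul_eq_mul, mul_one, Finset.card_univ, Fintype.card_fin]
      have hv0 : (((0:ℝ), fun _ => (1:ℝ)) : ℝ × (Fin d → ℝ)) ∈ V := by
        refine ⟨Or.inl rfl, ⟨fun i => Or.inr rfl, fun i _ => le_refl _⟩, ?_⟩
        show (0:ℝ) ≤ ∑ _i : Fin d, (1:ℝ)
        rw [hsc]; linarith
      have hv1 : (((1:ℝ), fun _ => (1:ℝ)) : ℝ × (Fin d → ℝ)) ∈ V := by
        refine ⟨Or.inr rfl, ⟨fun i => Or.inr rfl, fun i _ => le_refl _⟩, ?_⟩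
        show (1:ℝ) ≤ ∑ _i : Fin d, (1:ℝ)
        rw [hsc]; linarith
      have hco : ((w₁, fun _ => (1:ℝ)) : ℝ × (Fin d → ℝ))
          = (1 - w₁) • (((0:ℝ), fun _ => (1:ℝ)) : ℝ × (Fin d → ℝ))
            + w₁ • (((1:ℝ), fun _ => (1:ℝ)) : ℝ × (Fin d → ℝ)) := by
        simp only [Prod.smul_mk, Prod.mk_add_mk, smul_eq_mul, Prod.mk.injEq]
        constructor
        · ring
        · funext i; simp only [Pi.add_apply, Pi.smul_apply, smul_eq_mul]; ring
      rw [hco]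
      exact convex_convexHull ℝ V (subset_convexHull ℝ V hv0) (subset_convexHull ℝ V hv1)
        (by linarith) h0 (by ring)
    -- z_ℓ = 0 slice helper
    have hzeroℓ : ∀ (w₀ : ℝ) (y : Fin d → ℝ), w₀ ∈ Set.Icc (0:ℝ) 1 →
        (∀ i, y i ∈ Set.Icc (0:ℝ) 1) → y ℓ = 0 → w₀ ≤ ∑ i, y i →
        (w₀, y) ∈ convexHull ℝ V := by
      intro w₀ y hw₀ hy hyl hsum
      have hmem := hullC (Finset.univ.erase ℓ) w₀ y hw₀ hy (fun i hi => by
        have hi' : i = ℓ := by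
          by_contra h
          exact hi (Finset.mem_erase.2 ⟨h, Finset.mem_univ i⟩)
        rw [hi']; exact hyl) hsum
      refine convexHull_mono ?_ hmem
      rintro ⟨u, zz⟩ ⟨hu, h01, hsupp, hle⟩
      have hzl : zz ℓ = 0 := hsupp ℓ (by simp)
      refine ⟨hu, ⟨h01, fun i _ => ?_⟩, hle⟩
      have h' : zz i = 0 ∨ zz i = 1 := h01 i
      show zz ℓ ≤ zz i
      rw [hzl]
      rcases h' with h|h <;> rw [h] <;> norm_num
    -- main case analysis on t = z ℓ
    have ht0 : 0 ≤ z ℓ := (hz ℓ).1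
    have ht1 : z ℓ ≤ 1 := (hz ℓ).2
    rcases eq_or_lt_of_le ht1 with htop | htop
    · -- z ℓ = 1 : everything is 1
      have hall : ∀ i, z i = 1 := by
        intro i
        rcases eq_or_ne i ℓ with rfl | hne
        · exact htop
        · exact le_antisymm (hz i).2 (htop ▸ hhier i hne)
      have hzz : z = fun _ => (1:ℝ) := funext hall
      rw [show ((w, z) : ℝ × (Fin d → ℝ)) = (w, fun _ => (1:ℝ)) by rw [hzz]]
      exact hones w hw.1 hw.2
    rcases eq_or_lt_of_le ht0 with hbot | hbot
    · -- z ℓ = 0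
      refine hzeroℓ w z (Set.mem_Icc.2 hw) (fun i => Set.mem_Icc.2 (hz i)) hbot.symm ?_
      rw [hsum_split z, ← hbot, zero_add]
      rw [← hbot, mul_zero, sub_zero] at hkey
      exact hkey
    · -- 0 < z ℓ < 1
      set t := z ℓ with htdef
      have h1t : (0:ℝ) < 1 - t := by linarith
      set y : Fin d → ℝ := fun i => if i = ℓ then 0 else (z i - t) / (1 - t) with hy
      set wA : ℝ := if t ≤ w then 1 else w / t with hwA
      set wB : ℝ := if t ≤ w then (w - t) / (1 - t) else 0 with hwB
      have hkey2 : ((w, z) : ℝ × (Fin d → ℝ))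
          = t • ((wA, fun _ => (1:ℝ)) : ℝ × (Fin d → ℝ)) + (1 - t) • ((wB, y)) := by
        simp only [Prod.smul_mk, Prod.mk_add_mk, smul_eq_mul, Prod.mk.injEq]
        constructor
        · by_cases h : t ≤ w
          · simp only [hwA, hwB, if_pos h]
            field_simp
            ring
          · simp only [hwA, hwB, if_neg h]
            field_simp
            ring
        · funext i
          simp only [Pi.add_apply, Pi.smul_apply, smul_eq_mul, hy]
          rcases eq_or_ne i ℓ with rfl | hne
          · simp
            exact htdef.symm
          · simp only [hne, if_neg hne, if_false]
            field_simp
            ring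
      have hA : ((wA, fun _ => (1:ℝ)) : ℝ × (Fin d → ℝ)) ∈ convexHull ℝ V := by
        by_cases h : t ≤ w
        · simp only [hwA, if_pos h]; exact hones 1 zero_le_one le_rfl
        · push_neg at h
          simp only [hwA, if_neg (not_le.2 h)]
          exact hones (w / t) (div_nonneg hw.1 hbot.le) (by rw [div_le_one hbot]; linarith)
      have hB : ((wB, y) : ℝ × (Fin d → ℝ)) ∈ convexHull ℝ V := by
        have hyIcc : ∀ i, y i ∈ Set.Icc (0:ℝ) 1 := by
          intro i
          rcases eq_or_ne i ℓ with rfl | hne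
          · simp [hy]
          · simp only [hy, if_neg hne, Set.mem_Icc]
            constructor
            · exact div_nonneg (by linarith [hhier i hne]) h1t.le
            · rw [div_le_one h1t]; linarith [(hz i).2]
        have hsumy : ∑ i, y i = ((∑ i ∈ Finset.univ.erase ℓ, z i) - ((d:ℝ) - 1) * t) / (1 - t) := by
          rw [hsum_split y]
          have hyl' : y ℓ = 0 := by simp [hy]
          rw [hyl', zero_add]
          have : ∑ i ∈ Finset.univ.erase ℓ, y i
              = ∑ i ∈ Finset.univ.erase ℓ, (z i - t) / (1 - t) := by
            refine Finset.sum_congr rfl fun i hi => ?_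
            simp [hy, Finset.ne_of_mem_erase hi]
          rw [this, ← Finset.sum_div, Finset.sum_sub_distrib, Finset.sum_const, nsmul_eq_mul,
            hcard]
        refine hzeroℓ wB y ?_ hyIcc (by simp [hy]) ?_
        · by_cases h : t ≤ w
          · simp only [hwB, if_pos h, Set.mem_Icc]
            constructor
            · exact div_nonneg (by linarith) h1t.le
            · rw [div_le_one h1t]; linarith [hw.2]
          · simp only [hwB, if_neg h, Set.mem_Icc]
            norm_num
        · by_cases h : t ≤ w
          · simp only [hwB, if_pos h]
            rw [hsumy]
            exact (div_le_div_iff_of_pos_right h1t).2 (by linarith)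
          · simp only [hwB, if_neg h]
            exact Finset.sum_nonneg fun i _ => (hyIcc i).1
      rw [hkey2]
      exact convex_convexHull ℝ V hA hB ht0 (by linarith) (by ring)
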